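/- Let λ, Γ, A, B, C, T > 0 with λΓ ≤ 1 and T ≥ 1/(λΓ). Define φ, ψ : (0,Γ] → ℝ by φ(γ) = A/(exp(λγT) − 1) + Bγ + Cγ² and ψ(γ) = 2A·exp(−λγT) + Bγ + Cγ², and set γ* = min{ Γ, (1/(λT))·max(1, log(AλT/B)), (1/(λT))·max(1, log(Aλ²T²/C)) }. Then 1/(exp(λγ*T) − 1) ≤ 1 and φ(γ*) ≤ ψ(γ*) ≤ 2A·exp(−λΓT) + (3B/(λT))·max(1, log(AλT/B)) + (3C/(λ²T²))·(max(1, log(Aλ²T²/C)))². -/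

import Mathlib

noncomputable section

set_option maxHeartbeats 1000000

private lemma aux_exp_neg_le (Aa Bb Ll m : ℝ) (hB : 0 < Bb) (hL : 0 < Ll)
    (h : Aa * Ll ≤ Bb * Real.exp m) : Aa * Real.exp (-m) ≤ Bb / Ll := by
  have hE : 0 < Real.exp m := Real.exp_pos m
  rw [Real.exp_neg, le_div_iff₀ hL]
  have h2 : Aa * (Real.exp m)⁻¹ * Ll = Aa * Ll / Real.exp m := by
    field_simp
  rw [h2, div_le_iff₀ hE]
  linarith


/-- Learning-rate optimization lemma (strongly convex case): with
`γ* = min{Γ, (1/(λT)) max(1, log(AλT/B)), (1/(λT)) max(1, log(Aλ²T²/C))}`,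
one has `1/(exp(λγ*T) - 1) ≤ 1` and
`φ(γ*) ≤ ψ(γ*) ≤ 2A exp(−λΓT) + (3B/(λT)) max(1, log(AλT/B))
               + (3C/(λ²T²)) (max(1, log(Aλ²T²/C)))²`. -/
theorem learning_rate_optimization_strongly_convex
    (lam Γ A B C T : ℝ)
    (hlam : 0 < lam) (hΓ : 0 < Γ) (hA : 0 < A) (hB : 0 < B) (hC : 0 < C) (hT : 0 < T)
    (hlamΓ : lam * Γ ≤ 1) (hTbig : 1 / (lam * Γ) ≤ T) :
    ∀ γstar : ℝ,
      γstar = min Γ (min ((1 / (lam * T)) * max 1 (Real.log (A * lam * T / B)))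
        ((1 / (lam * T)) * max 1 (Real.log (A * lam ^ 2 * T ^ 2 / C)))) →
      1 / (Real.exp (lam * γstar * T) - 1) ≤ 1 ∧
      A / (Real.exp (lam * γstar * T) - 1) + B * γstar + C * γstar ^ 2
        ≤ 2 * A * Real.exp (-(lam * γstar * T)) + B * γstar + C * γstar ^ 2 ∧
      2 * A * Real.exp (-(lam * γstar * T)) + B * γstar + C * γstar ^ 2
        ≤ 2 * A * Real.exp (-(lam * Γ * T))
          + (3 * B / (lam * T)) * max 1 (Real.log (A * lam * T / B))
          + (3 * C / (lam ^ 2 * T ^ 2)) * (max 1 (Real.log (A * lam ^ 2 * T ^ 2 / C))) ^ 2 := by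
  intro γstar hγ
  set L : ℝ := lam * T with hL
  have hLpos : 0 < L := mul_pos hlam hT
  set m1 : ℝ := max 1 (Real.log (A * lam * T / B)) with hm1def
  set m2 : ℝ := max 1 (Real.log (A * lam ^ 2 * T ^ 2 / C)) with hm2def
  have hm1 : 1 ≤ m1 := le_max_left _ _
  have hm2 : 1 ≤ m2 := le_max_left _ _
  have hΓT : 1 ≤ lam * Γ * T := by
    rw [div_le_iff₀ (mul_pos hlam hΓ)] at hTbig
    nlinarith
  have hmul : ∀ a b : ℝ, L * min a b = min (L * a) (L * b) := by
    intro a b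
    rcases le_total a b with h | h
    · rw [min_eq_left h, min_eq_left (by nlinarith)]
    · rw [min_eq_right h, min_eq_right (by nlinarith)]
  have h1 : L * (1 / L * m1) = m1 := by field_simp
  have h2 : L * (1 / L * m2) = m2 := by field_simp
  have hx : lam * γstar * T = min (lam * Γ * T) (min m1 m2) := by
    calc lam * γstar * T = L * γstar := by ring
      _ = min (L * Γ) (min (L * (1 / L * m1)) (L * (1 / L * m2))) := by
          rw [hγ, hmul, hmul]
      _ = min (lam * Γ * T) (min m1 m2) := by rw [h1, h2, hL]; ring_nf
  have hx1 : 1 ≤ lam * γstar * T := by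
    rw [hx]
    exact le_min hΓT (le_min hm1 hm2)
  have hE2 : 2 ≤ Real.exp (lam * γstar * T) := by
    have := Real.add_one_le_exp (lam * γstar * T)
    linarith
  have hEpos : 0 < Real.exp (lam * γstar * T) - 1 := by linarith
  have hEpos' : 0 < Real.exp (lam * γstar * T) := Real.exp_pos _
  -- bounds on γstar
  have hγ1 : γstar ≤ 1 / L * m1 := hγ ▸ le_trans (min_le_right _ _) (min_le_left _ _)
  have hγ2 : γstar ≤ 1 / L * m2 := hγ ▸ le_trans (min_le_right _ _) (min_le_right _ _)
  have hγpos : 0 < γstar := by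
    rw [hγ]
    refine lt_min hΓ (lt_min ?_ ?_) <;> positivity
  have hBγ : B * γstar ≤ B / L * m1 := by
    have := mul_le_mul_of_nonneg_left hγ1 hB.le
    calc B * γstar ≤ B * (1 / L * m1) := this
      _ = B / L * m1 := by ring
  have hCγ : C * γstar ^ 2 ≤ C / L ^ 2 * m2 ^ 2 := by
    have h0 : γstar ^ 2 ≤ (1 / L * m2) ^ 2 := by nlinarith
    have h3 := mul_le_mul_of_nonneg_left h0 hC.le
    have h4 : C * (1 / L * m2) ^ 2 = C / L ^ 2 * m2 ^ 2 := by
      field_simp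
    linarith
  have hBLpos : 0 < B / L * m1 := by positivity
  have hCLpos : 0 < C / L ^ 2 * m2 ^ 2 := by positivity
  have e1 : 3 * B / L * m1 = 3 * (B / L * m1) := by ring
  have e2 : 3 * C / L ^ 2 * m2 ^ 2 = 3 * (C / L ^ 2 * m2 ^ 2) := by ring
  refine ⟨?_, ?_, ?_⟩
  · rw [div_le_one hEpos]; linarith
  · have key : A / (Real.exp (lam * γstar * T) - 1)
        ≤ 2 * A * Real.exp (-(lam * γstar * T)) := by
      have heq : 2 * A * Real.exp (-(lam * γstar * T))
          = 2 * A / Real.exp (lam * γstar * T) := by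
        rw [Real.exp_neg]; ring
      rw [heq, div_le_div_iff₀ hEpos hEpos']
      nlinarith
    linarith
  · -- main bound
    have hrw1 : (3 * B / (lam * T)) * m1 = 3 * B / L * m1 := by rw [hL]
    have hrw2 : (3 * C / (lam ^ 2 * T ^ 2)) * m2 ^ 2 = 3 * C / L ^ 2 * m2 ^ 2 := by
      rw [hL]; ring_nf
    rw [hrw1, hrw2]
    have hexpΓ : 0 < Real.exp (-(lam * Γ * T)) := Real.exp_pos _
    have hAexpΓ : 0 ≤ 2 * A * Real.exp (-(lam * Γ * T)) := by positivity
    have hBL : 0 < B / L := div_pos hB hLpos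
    have hCL : 0 < C / L ^ 2 := by positivity
    rcases min_cases (lam * Γ * T) (min m1 m2) with ⟨heq, _⟩ | ⟨heq, _⟩
    · -- γstar corresponds to Γ
      rw [hx, heq]
      linarith
    · rcases min_cases m1 m2 with ⟨heq2, _⟩ | ⟨heq2, _⟩
      · -- x = m1
        rw [hx, heq, heq2]
        have hlog : Real.log (A * lam * T / B) ≤ m1 := le_max_right _ _
        have hALB : (0:ℝ) < A * lam * T / B := by positivity
        have hexp : A * L / B ≤ Real.exp m1 := by
          have h5 := Real.exp_le_exp.mpr hlog
          rw [Real.exp_log hALB] at h5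
          calc A * L / B = A * lam * T / B := by rw [hL]; ring
            _ ≤ Real.exp m1 := h5
        have hexp' : A * L ≤ B * Real.exp m1 := by
          rw [div_le_iff₀ hB] at hexp; linarith
        have hprod : Real.exp (-m1) * Real.exp m1 = 1 := by
          rw [← Real.exp_add]; simp
        have hEneg : 0 < Real.exp (-m1) := Real.exp_pos _
        have hfin : A * Real.exp (-m1) ≤ B / L :=
          aux_exp_neg_le A B L m1 hB hLpos hexp'
        have hstep : B / L ≤ B / L * m1 := le_mul_of_one_le_right hBL.le hm1
        linarith
      · -- x = m2
        rw [hx, heq, heq2]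
        have hlog : Real.log (A * lam ^ 2 * T ^ 2 / C) ≤ m2 := le_max_right _ _
        have hALC : (0:ℝ) < A * lam ^ 2 * T ^ 2 / C := by positivity
        have hexp : A * L ^ 2 / C ≤ Real.exp m2 := by
          have h5 := Real.exp_le_exp.mpr hlog
          rw [Real.exp_log hALC] at h5
          calc A * L ^ 2 / C = A * lam ^ 2 * T ^ 2 / C := by rw [hL]; ring
            _ ≤ Real.exp m2 := h5
        have hexp' : A * L ^ 2 ≤ C * Real.exp m2 := by
          rw [div_le_iff₀ hC] at hexp; linarith
        have hprod : Real.exp (-m2) * Real.exp m2 = 1 := by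
          rw [← Real.exp_add]; simp
        have hEneg : 0 < Real.exp (-m2) := Real.exp_pos _
        have hfin : A * Real.exp (-m2) ≤ C / L ^ 2 :=
          aux_exp_neg_le A C (L ^ 2) m2 hC (by positivity) hexp'
        have hm2sq : 1 ≤ m2 ^ 2 := by
          have h6 : (1:ℝ) * 1 ≤ m2 * m2 :=
            mul_le_mul hm2 hm2 zero_le_one (le_trans zero_le_one hm2)
          calc (1:ℝ) = 1 * 1 := by ring
            _ ≤ m2 * m2 := h6
            _ = m2 ^ 2 := by ring
        have hstep : C / L ^ 2 ≤ C / L ^ 2 * m2 ^ 2 := le_mul_of_one_le_right hCL.le hm2sq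
        linarith
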